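/- Lower bound on a vector potential over a disk (Lemma 9.3): Let D_R ⊂ ℝ² be an open disk of radius R > 0, let A ∈ C¹ be an ℝ²-valued vector field on a neighbourhood of the closure of D_R, and suppose curl A (x) ≥ b₀ for all x ∈ D_R, where b₀ > 0. Then ∫_{D_R} |A(x)|² dx ≥ (π/8) b₀² R⁴. -/

import Mathlib

open MeasureTheory

noncomputable section

/-- Partial derivative in the first coordinate direction. -/
def pd1 {F : Type*} [NormedAddCommGroup F] [NormedSpace ℝ F]
    (f : ℝ × ℝ → F) (x : ℝ × ℝ) : F := fderiv ℝ f x (1, 0)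

/-- Partial derivative in the second coordinate direction. -/
def pd2 {F : Type*} [NormedAddCommGroup F] [NormedSpace ℝ F]
    (f : ℝ × ℝ → F) (x : ℝ × ℝ) : F := fderiv ℝ f x (0, 1)

/-- `curl A = ∂₁A₂ - ∂₂A₁`. -/
def curl2 (A : ℝ × ℝ → ℝ × ℝ) (x : ℝ × ℝ) : ℝ :=
  pd1 (fun y => (A y).2) x - pd2 (fun y => (A y).1) x

/-- The open Euclidean disk of radius `R` centered at `c`. -/
def ediskO (c : ℝ × ℝ) (R : ℝ) : Set (ℝ × ℝ) :=
  {x | (x.1 - c.1) ^ 2 + (x.2 - c.2) ^ 2 < R ^ 2}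

namespace Lemma93

open Set


/-- Smoothed version of `max s 0`. -/
def phi (ε s : ℝ) : ℝ := (max s 0)^2 / (max s 0 + ε)

/-- Derivative of `phi`. -/
def psi (ε s : ℝ) : ℝ := ((max s 0)^2 + 2*ε*(max s 0)) / (max s 0 + ε)^2

variable {ε s : ℝ}

lemma max_nonneg' : (0:ℝ) ≤ max s 0 := le_max_right _ _

lemma den_pos (hε : 0 < ε) : 0 < max s 0 + ε := by positivity

lemma phi_nonneg (hε : 0 < ε) : 0 ≤ phi ε s := by
  unfold phi; positivity

lemma phi_of_nonpos (hs : s ≤ 0) : phi ε s = 0 := by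
  unfold phi; rw [max_eq_right hs]; simp

lemma psi_of_nonpos (hs : s ≤ 0) : psi ε s = 0 := by
  unfold psi; rw [max_eq_right hs]; simp

lemma phi_ge (hε : 0 < ε) : s - ε ≤ phi ε s := by
  unfold phi
  rcases le_or_gt s 0 with h | h
  · rw [max_eq_right h]; simp; nlinarith
  · rw [max_eq_left h.le]
    rw [le_div_iff₀ (by positivity : (0:ℝ) < s + ε)]
    nlinarith

lemma phi_le_sq (hε : 0 < ε) : phi ε s ≤ s^2 / ε := by
  unfold phi
  rcases le_or_gt s 0 with h | h
  · rw [max_eq_right h]; simp; positivity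
  · rw [max_eq_left h.le, div_le_div_iff₀ (by positivity) hε]
    nlinarith

lemma psi_nonneg (hε : 0 < ε) : 0 ≤ psi ε s := by
  unfold psi
  have := @max_nonneg' s
  positivity

lemma psi_le_one (hε : 0 < ε) : psi ε s ≤ 1 := by
  unfold psi
  rw [div_le_one (by positivity)]
  have := @max_nonneg' s
  nlinarith

lemma continuous_psi (hε : 0 < ε) : Continuous (psi ε) := by
  unfold psi
  apply Continuous.div
  · fun_prop
  · fun_prop
  · intro x; have := @den_pos ε x hε; positivity

lemma continuous_phi (hε : 0 < ε) : Continuous (phi ε) := by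
  unfold phi
  apply Continuous.div
  · fun_prop
  · fun_prop
  · intro x; have := @den_pos ε x hε; positivity

lemma hasDerivAt_phi (hε : 0 < ε) (s : ℝ) : HasDerivAt (phi ε) (psi ε s) s := by
  rcases lt_trichotomy s 0 with h | h | h
  · have : HasDerivAt (phi ε) 0 s := by
      apply (hasDerivAt_const s (0:ℝ)).congr_of_eventuallyEq
      filter_upwards [eventually_lt_nhds h] with y hy
      exact phi_of_nonpos hy.le
    rwa [psi_of_nonpos h.le]
  · subst h
    rw [psi_of_nonpos le_rfl]
    rw [hasDerivAt_iff_tendsto_slope]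
    have hb : ∀ y : ℝ, |slope (phi ε) 0 y| ≤ |y| / ε := by
      intro y
      rcases eq_or_ne y 0 with rfl | hy
      · simp [slope, phi_of_nonpos le_rfl]
      · rw [slope_def_field, phi_of_nonpos le_rfl, sub_zero, sub_zero]
        rw [abs_div, div_le_div_iff₀ (abs_pos.2 hy) hε]
        have h1 : |phi ε y| ≤ y^2/ε := by
          rw [abs_of_nonneg (phi_nonneg hε)]; exact phi_le_sq hε
        calc |phi ε y| * ε ≤ (y^2/ε) * ε := by nlinarith [abs_nonneg (phi ε y)]
          _ = |y| * |y| := by field_simp [abs_mul_abs_self, sq]; exact (sq_abs y).symm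
    have : Filter.Tendsto (fun y : ℝ => |y| / ε) (nhdsWithin 0 {(0:ℝ)}ᶜ) (nhds 0) := by
      have : Filter.Tendsto (fun y : ℝ => |y| / ε) (nhds 0) (nhds 0) := by
        have := (continuous_abs.div_const ε).tendsto (0:ℝ)
        simpa using this
      exact this.mono_left nhdsWithin_le_nhds
    apply squeeze_zero_norm _ this
    intro y; exact hb y
  · have heq : phi ε =ᶠ[nhds s] fun y => y^2/(y+ε) := by
      filter_upwards [eventually_gt_nhds h] with y hy
      unfold phi; rw [max_eq_left hy.le]
    have hd : HasDerivAt (fun y : ℝ => y^2/(y+ε)) (psi ε s) s := by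
      have h1 : HasDerivAt (fun y : ℝ => y^2) (2*s) s := by
        simpa using (hasDerivAt_pow 2 s)
      have h2 : HasDerivAt (fun y : ℝ => y + ε) 1 s := (hasDerivAt_id s).add_const ε
      have hne : s + ε ≠ 0 := by positivity
      have := h1.div h2 hne
      refine this.congr_deriv ?_
      unfold psi
      rw [max_eq_left h.le]
      field_simp
      ring
    exact hd.congr_of_eventuallyEq heq

def tfun (c : ℝ × ℝ) (R : ℝ) (x : ℝ × ℝ) : ℝ := R^2 - (x.1 - c.1)^2 - (x.2 - c.2)^2

lemma continuous_tfun (c : ℝ × ℝ) (R : ℝ) : Continuous (tfun c R) := by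
  unfold tfun; fun_prop

/-- The derivative of `tfun` at `x`. -/
def Dt (c : ℝ × ℝ) (x : ℝ × ℝ) : ℝ × ℝ →L[ℝ] ℝ :=
  (-(2*(x.1 - c.1))) • ContinuousLinearMap.fst ℝ ℝ ℝ
    + (-(2*(x.2 - c.2))) • ContinuousLinearMap.snd ℝ ℝ ℝ

@[simp] lemma Dt_apply (c x v : ℝ × ℝ) :
    Dt c x v = -(2*(x.1 - c.1)) * v.1 + -(2*(x.2 - c.2)) * v.2 := by
  simp [Dt]

lemma hasFDerivAt_tfun (c : ℝ × ℝ) (R : ℝ) (x : ℝ × ℝ) :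
    HasFDerivAt (tfun c R) (Dt c x) x := by
  have hf := (hasFDerivAt_fst (𝕜 := ℝ) (p := x)).sub_const c.1
  have hg := (hasFDerivAt_snd (𝕜 := ℝ) (p := x)).sub_const c.2
  have h1 : HasFDerivAt (fun y : ℝ × ℝ => (y.1 - c.1)^2)
      ((x.1 - c.1) • ContinuousLinearMap.fst ℝ ℝ ℝ
        + (x.1 - c.1) • ContinuousLinearMap.fst ℝ ℝ ℝ) x := by
    simp only [pow_two]; exact hf.mul hf
  have h2 : HasFDerivAt (fun y : ℝ × ℝ => (y.2 - c.2)^2)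
      ((x.2 - c.2) • ContinuousLinearMap.snd ℝ ℝ ℝ
        + (x.2 - c.2) • ContinuousLinearMap.snd ℝ ℝ ℝ) x := by
    simp only [pow_two]; exact hg.mul hg
  have := ((hasFDerivAt_const (R^2) x).sub h1).sub h2
  refine this.congr_fderiv ?_
  ext v <;> simp [Dt] <;> ring

lemma mem_ediskO_iff {c : ℝ × ℝ} {R : ℝ} {x : ℝ × ℝ} :
    x ∈ ediskO c R ↔ 0 < tfun c R x := by
  simp only [ediskO, Set.mem_setOf_eq, tfun]; constructor <;> intro <;> linarith

lemma isOpen_ediskO (c : ℝ × ℝ) (R : ℝ) : IsOpen (ediskO c R) := by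
  have : ediskO c R = (tfun c R) ⁻¹' (Set.Ioi 0) := by
    ext x; simp [mem_ediskO_iff, tfun]
  rw [this]
  exact isOpen_Ioi.preimage (continuous_tfun c R)

lemma measurableSet_ediskO (c : ℝ × ℝ) (R : ℝ) : MeasurableSet (ediskO c R) :=
  (isOpen_ediskO c R).measurableSet

/-- The closed disk is contained in the closure of the open disk. -/
lemma mem_closure_of_tfun_nonneg {c : ℝ × ℝ} {R : ℝ} (hR : 0 < R) {x : ℝ × ℝ}
    (hx : 0 ≤ tfun c R x) : x ∈ closure (ediskO c R) := by
  rcases lt_or_eq_of_le hx with h | h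
  · exact subset_closure (mem_ediskO_iff.2 h)
  -- boundary case: approximate by scaled points
  have hsum : (x.1 - c.1)^2 + (x.2 - c.2)^2 = R^2 := by unfold tfun at h; linarith
  have hseq : Filter.Tendsto
      (fun n : ℕ => ((c.1 + (1 - 1/(n+1)) * (x.1 - c.1), c.2 + (1 - 1/(n+1)) * (x.2 - c.2)) : ℝ × ℝ))
      Filter.atTop (nhds x) := by
    have hθ : Filter.Tendsto (fun n : ℕ => (1 - 1/((n:ℝ)+1))) Filter.atTop (nhds 1) := by
      have := tendsto_one_div_add_atTop_nhds_zero_nat (𝕜 := ℝ)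
      have h2 := this.const_sub (1:ℝ)
      simpa using h2
    have h1 : Filter.Tendsto (fun n : ℕ => c.1 + (1 - 1/((n:ℝ)+1)) * (x.1 - c.1))
        Filter.atTop (nhds (c.1 + 1 * (x.1 - c.1))) := (hθ.mul_const _).const_add _
    have h2 : Filter.Tendsto (fun n : ℕ => c.2 + (1 - 1/((n:ℝ)+1)) * (x.2 - c.2))
        Filter.atTop (nhds (c.2 + 1 * (x.2 - c.2))) := (hθ.mul_const _).const_add _
    have := h1.prodMk_nhds h2
    simpa using this
  apply mem_closure_of_tendsto hseq
  filter_upwards with n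
  have hn : (0:ℝ) < 1/((n:ℝ)+1) := by positivity
  have hn1 : 1/((n:ℝ)+1) ≤ 1 := by
    rw [div_le_one (by positivity)]; linarith [Nat.cast_nonneg (α := ℝ) n]
  rw [mem_ediskO_iff]
  unfold tfun
  simp only
  have key : (c.1 + (1 - 1/((n:ℝ)+1)) * (x.1 - c.1) - c.1)^2
      + (c.2 + (1 - 1/((n:ℝ)+1)) * (x.2 - c.2) - c.2)^2
      = (1 - 1/((n:ℝ)+1))^2 * R^2 := by
    rw [← hsum]; ring
  have hθ0 : 0 ≤ 1 - 1/((n:ℝ)+1) := by linarith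
  have hθ1 : 1 - 1/((n:ℝ)+1) < 1 := by linarith
  have hsq : (1 - 1/((n:ℝ)+1))^2 < 1 := by nlinarith
  nlinarith [key, mul_pos hR hR]

lemma tfun_neg_of_not_mem_closure {c : ℝ × ℝ} {R : ℝ} (hR : 0 < R) {x : ℝ × ℝ}
    (hx : x ∉ closure (ediskO c R)) : tfun c R x < 0 := by
  by_contra h
  exact hx (mem_closure_of_tfun_nonneg hR (not_lt.1 h))

lemma tfun_nonpos_of_not_mem {c : ℝ × ℝ} {R : ℝ} {x : ℝ × ℝ}
    (hx : x ∉ ediskO c R) : tfun c R x ≤ 0 := by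
  by_contra h
  exact hx (mem_ediskO_iff.2 (not_le.1 h))
/-- The candidate derivative of `x ↦ phi ε (tfun c R x) * B x`. -/
def DF (ε : ℝ) (c : ℝ × ℝ) (R : ℝ) (B : ℝ × ℝ → ℝ) (x : ℝ × ℝ) : ℝ × ℝ →L[ℝ] ℝ :=
  B x • (psi ε (tfun c R x) • Dt c x) + phi ε (tfun c R x) • fderiv ℝ B x

set_option maxHeartbeats 1000000 in
lemma key_deriv {ε : ℝ} (hε : 0 < ε) (c : ℝ × ℝ) {R : ℝ} (hR : 0 < R)
    {W : Set (ℝ × ℝ)} (hW : IsOpen W) (hWc : closure (ediskO c R) ⊆ W)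
    {B : ℝ × ℝ → ℝ} (hB : ∀ x ∈ W, DifferentiableAt ℝ B x) (x : ℝ × ℝ) :
    HasFDerivAt (fun y => phi ε (tfun c R y) * B y) (DF ε c R B x) x := by
  rcases lt_trichotomy (tfun c R x) 0 with h | h | h
  · -- outside the closed disk: locally zero
    have hDF : DF ε c R B x = 0 := by
      unfold DF
      rw [phi_of_nonpos h.le, psi_of_nonpos h.le]
      simp
    rw [hDF]
    apply (hasFDerivAt_const (0:ℝ) x).congr_of_eventuallyEq
    have hev : ∀ᶠ y in nhds x, tfun c R y < 0 :=
      (continuous_tfun c R).continuousAt.eventually_lt continuousAt_const h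
    filter_upwards [hev] with y hy
    rw [phi_of_nonpos hy.le, zero_mul]
  · -- boundary: derivative zero via little-o estimate
    have hxcl : x ∈ closure (ediskO c R) := mem_closure_of_tfun_nonneg hR h.ge
    have hxW : x ∈ W := hWc hxcl
    have hDF : DF ε c R B x = 0 := by
      unfold DF
      rw [h, phi_of_nonpos le_rfl, psi_of_nonpos le_rfl]
      simp
    rw [hDF]
    rw [hasFDerivAt_iff_isLittleO_nhds_zero]
    have hphix : phi ε (tfun c R x) * B x = 0 := by
      rw [h, phi_of_nonpos le_rfl, zero_mul]
    simp only [ContinuousLinearMap.zero_apply, hphix, sub_zero]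
    rw [Asymptotics.isLittleO_iff]
    intro cc hcc
    obtain ⟨C, hC⟩ := ((hasFDerivAt_tfun c R x).isBigO_sub).bound
    set C' : ℝ := max C 0 with hC'def
    have hC0 : 0 ≤ C' := le_max_right _ _
    set M : ℝ := |B x| + 1 with hMdef
    have hM : 0 < M := by positivity
    set K : ℝ := C'^2 * M with hKdef
    have hK : 0 ≤ K := by positivity
    set δ : ℝ := cc * ε / (K + 1) with hδdef
    have hδ : 0 < δ := by positivity
    have hBb : ∀ᶠ y in nhds x, |B y| < M := by
      have habs : Filter.Tendsto (fun y => |B y|) (nhds x) (nhds |B x|) :=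
        (continuous_abs.tendsto _).comp (hB x hxW).continuousAt
      exact habs.eventually_lt_const (by simp [hMdef])
    have hsmall : ∀ᶠ y in nhds x, ‖y - x‖ < δ := by
      filter_upwards [Metric.ball_mem_nhds x hδ] with y hy
      rwa [Metric.mem_ball, dist_eq_norm] at hy
    have hall : ∀ᶠ y in nhds x,
        ‖phi ε (tfun c R y) * B y‖ ≤ cc * ‖y - x‖ := by
      filter_upwards [hC, hBb, hsmall] with y h1 h2 h3
      rw [h, sub_zero] at h1
      set a : ℝ := tfun c R y
      set n : ℝ := ‖y - x‖ with hndef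
      have hn0 : (0:ℝ) ≤ n := norm_nonneg _
      have habs : |a| ≤ C' * n := by
        calc |a| = ‖a‖ := (Real.norm_eq_abs a).symm
          _ ≤ C * n := h1
          _ ≤ C' * n := by
            apply mul_le_mul_of_nonneg_right (le_max_left _ _) hn0
      have hasq : a^2 ≤ (C'*n)^2 := by nlinarith [abs_nonneg a, sq_abs a]
      have e1 : |phi ε a| ≤ a^2/ε := by
        rw [abs_of_nonneg (phi_nonneg hε)]; exact phi_le_sq hε
      have hnδ : n * (K+1) ≤ cc * ε := by
        rw [hδdef] at h3
        rw [lt_div_iff₀ (by positivity)] at h3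
        exact h3.le
      calc ‖phi ε a * B y‖ = |phi ε a| * |B y| := by
            rw [Real.norm_eq_abs, abs_mul]
        _ ≤ (a^2/ε) * M := by
            apply mul_le_mul e1 h2.le (abs_nonneg _) (by positivity)
        _ ≤ ((C'*n)^2/ε) * M := by
            gcongr
        _ ≤ cc * n := by
            rw [div_mul_eq_mul_div, div_le_iff₀ hε]
            have h5 : n * (n * (K+1)) ≤ n * (cc * ε) :=
              mul_le_mul_of_nonneg_left hnδ hn0
            rw [hKdef] at h5
            nlinarith [h5, sq_nonneg n]
    -- transfer to the 𝓝 0 statement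
    rw [← map_add_left_nhds_zero x, Filter.eventually_map] at hall
    filter_upwards [hall] with y hy
    simpa using hy
  · -- interior: chain rule + product rule
    have hxW : x ∈ W := hWc (subset_closure (mem_ediskO_iff.2 h))
    have hφ : HasFDerivAt (fun y => phi ε (tfun c R y))
        (psi ε (tfun c R x) • Dt c x) x :=
      (hasDerivAt_phi hε (tfun c R x)).comp_hasFDerivAt x (hasFDerivAt_tfun c R x)
    have hBd : HasFDerivAt B (fderiv ℝ B x) x := (hB x hxW).hasFDerivAt
    have := hφ.mul hBd
    unfold DF
    refine this.congr_fderiv ?_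
    rw [add_comm]
lemma key_cont {ε : ℝ} (hε : 0 < ε) (c : ℝ × ℝ) {R : ℝ} (hR : 0 < R)
    {W : Set (ℝ × ℝ)} (hW : IsOpen W) (hWc : closure (ediskO c R) ⊆ W)
    {B : ℝ × ℝ → ℝ} (hB : ContinuousOn B W) :
    Continuous (fun y => phi ε (tfun c R y) * B y) := by
  rw [continuous_iff_continuousAt]
  intro x
  by_cases hx : x ∈ W
  · exact (((continuous_phi hε).comp (continuous_tfun c R)).continuousAt).mul
      (hB.continuousAt (hW.mem_nhds hx))
  · have hxc : x ∉ closure (ediskO c R) := fun hc => hx (hWc hc)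
    have ht : tfun c R x < 0 := tfun_neg_of_not_mem_closure hR hxc
    apply Filter.EventuallyEq.continuousAt (y := 0)
    have hev : ∀ᶠ y in nhds x, tfun c R y < 0 :=
      (continuous_tfun c R).continuousAt.eventually_lt continuousAt_const ht
    filter_upwards [hev] with y hy
    rw [phi_of_nonpos hy.le, zero_mul]

/-- Polar-coordinates computation of a radial integral over the disk. -/
lemma disk_integral (c : ℝ × ℝ) {R : ℝ} (hR : 0 < R) (g : ℝ → ℝ) :
    ∫ x in ediskO c R, g ((x.1 - c.1)^2 + (x.2 - c.2)^2)
      = (2 * Real.pi) * ∫ r in (0:ℝ)..R, r * g (r^2) := by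
  set F : ℝ × ℝ → ℝ := (ediskO (0,0) R).indicator (fun y => g (y.1^2 + y.2^2)) with hF
  have step1 : ∫ x in ediskO c R, g ((x.1 - c.1)^2 + (x.2 - c.2)^2) = ∫ x, F (x - c) := by
    rw [← integral_indicator (measurableSet_ediskO c R)]
    congr 1
    funext x
    have hmem : x - c ∈ ediskO ((0:ℝ),(0:ℝ)) R ↔ x ∈ ediskO c R := by
      simp [ediskO]
    rw [hF]
    by_cases hx : x ∈ ediskO c R
    · rw [Set.indicator_of_mem hx, Set.indicator_of_mem (hmem.2 hx)]
      simp
    · rw [Set.indicator_of_notMem hx, Set.indicator_of_notMem (fun hc => hx (hmem.1 hc))]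
  rw [step1, integral_sub_right_eq_self F c]
  rw [← integral_comp_polarCoord_symm F]
  have htarget : polarCoord.target = Set.Ioi (0:ℝ) ×ˢ Set.Ioo (-Real.pi) Real.pi := rfl
  have hcongr : ∀ p ∈ polarCoord.target,
      p.1 • F (polarCoord.symm p)
        = ((Set.Ioo (0:ℝ) R).indicator (fun r => r * g (r^2)) p.1) * (fun _ => (1:ℝ)) p.2 := by
    rintro ⟨r, θ⟩ hp
    rw [htarget] at hp
    obtain ⟨hr, hθ⟩ := hp
    simp only [Set.mem_Ioi] at hr
    have hsymm : polarCoord.symm (r, θ) = (r * Real.cos θ, r * Real.sin θ) := rfl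
    rw [hsymm, hF]
    have hsq : (r * Real.cos θ)^2 + (r * Real.sin θ)^2 = r^2 := by
      have := Real.sin_sq_add_cos_sq θ
      ring_nf
      nlinarith [this]
    have hmem2 : ((r * Real.cos θ, r * Real.sin θ) : ℝ × ℝ) ∈ ediskO ((0:ℝ),(0:ℝ)) R
        ↔ r ∈ Set.Ioo 0 R := by
      simp only [ediskO, Set.mem_setOf_eq, Set.mem_Ioo]
      constructor
      · intro hlt
        refine ⟨hr, ?_⟩
        simp only [sub_zero] at hlt
        rw [hsq] at hlt
        nlinarith
      · rintro ⟨-, hrR⟩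
        simp only [sub_zero]
        rw [hsq]
        nlinarith
    by_cases hrR : r ∈ Set.Ioo 0 R
    · rw [Set.indicator_of_mem (hmem2.2 hrR), Set.indicator_of_mem hrR]
      simp only [sub_zero, smul_eq_mul, mul_one]
      rw [hsq]
    · rw [Set.indicator_of_notMem (fun hc => hrR (hmem2.1 hc)), Set.indicator_of_notMem hrR]
      simp
  rw [setIntegral_congr_fun polarCoord.open_target.measurableSet hcongr]
  rw [htarget, Measure.volume_eq_prod,
    setIntegral_prod_mul ((Set.Ioo (0:ℝ) R).indicator (fun r => r * g (r^2)))
      (fun _ => (1:ℝ)) (Set.Ioi (0:ℝ)) (Set.Ioo (-Real.pi) Real.pi)]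
  have hθint : ∫ (θ : ℝ) in Set.Ioo (-Real.pi) Real.pi, (1:ℝ) = 2 * Real.pi := by
    rw [setIntegral_const, measureReal_def, Real.volume_Ioo,
      ENNReal.toReal_ofReal (by linarith [Real.pi_pos])]
    rw [smul_eq_mul, mul_one]
    ring
  have hrint : ∫ r in Set.Ioi (0:ℝ), (Set.Ioo (0:ℝ) R).indicator (fun r => r * g (r^2)) r
      = ∫ r in (0:ℝ)..R, r * g (r^2) := by
    rw [setIntegral_indicator measurableSet_Ioo]
    rw [Set.inter_eq_self_of_subset_right Set.Ioo_subset_Ioi_self]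
    rw [intervalIntegral.integral_of_le hR.le]
    exact setIntegral_congr_set MeasureTheory.Ioo_ae_eq_Ioc
  rw [hθint, hrint]
  ring
lemma int1 (R ε : ℝ) : ∫ r in (0:ℝ)..R, r * (R^2 - r^2 - ε) = R^4/4 - ε*R^2/2 := by
  have hd : ∀ r ∈ Set.uIcc (0:ℝ) R, HasDerivAt (fun s : ℝ => R^2*s^2/2 - s^4/4 - ε*s^2/2)
      (r * (R^2 - r^2 - ε)) r := by
    intro r _
    have h2 := hasDerivAt_pow 2 r
    have h4 := hasDerivAt_pow 4 r
    have := (((h2.const_mul (R^2)).div_const 2).sub (h4.div_const 4)).sub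
      ((h2.const_mul ε).div_const 2)
    refine this.congr_deriv ?_
    push_cast
    ring
  rw [intervalIntegral.integral_eq_sub_of_hasDerivAt hd (by apply Continuous.intervalIntegrable; fun_prop)]
  ring

lemma int2 (R : ℝ) : ∫ r in (0:ℝ)..R, r * (4*r^2) = R^4 := by
  have hd : ∀ r ∈ Set.uIcc (0:ℝ) R, HasDerivAt (fun s : ℝ => s^4) (r * (4*r^2)) r := by
    intro r _
    have h4 := hasDerivAt_pow 4 r
    refine h4.congr_deriv ?_
    push_cast
    ring
  rw [intervalIntegral.integral_eq_sub_of_hasDerivAt hd (by apply Continuous.intervalIntegrable; fun_prop)]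
  ring

lemma amgm {b : ℝ} (hb : 0 < b) (u₁ u₂ v₁ v₂ : ℝ) :
    u₁*v₁ + u₂*v₂ ≤ (2/b)*(u₁^2+u₂^2) + (b/8)*(v₁^2+v₂^2) := by
  have hkey : (2/b)*(u₁^2+u₂^2) + (b/8)*(v₁^2+v₂^2) - (u₁*v₁ + u₂*v₂)
      = ((4*u₁ - b*v₁)^2 + (4*u₂ - b*v₂)^2)/(8*b) := by
    field_simp
    ring
  nlinarith [div_nonneg (by positivity : (0:ℝ) ≤ (4*u₁ - b*v₁)^2 + (4*u₂ - b*v₂)^2)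
    (by positivity : (0:ℝ) ≤ 8*b), hkey]

end Lemma93

open Lemma93 in
set_option maxHeartbeats 2000000 in
/-- Lower bound on a vector potential over a disk: if `A` is `C¹` on a neighbourhood of the
closed disk of radius `R` and `curl A ≥ b₀ > 0` on the disk, then
`∫_{D_R} |A|² ≥ (π/8) b₀² R⁴`. -/
theorem stmt1 (c : ℝ × ℝ) (R : ℝ) (hR : 0 < R) (b₀ : ℝ) (hb₀ : 0 < b₀)
    (A : ℝ × ℝ → ℝ × ℝ) (W : Set (ℝ × ℝ)) (hW : IsOpen W)
    (hWc : closure (ediskO c R) ⊆ W) (hA : ContDiffOn ℝ 1 A W)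
    (hcurl : ∀ x ∈ ediskO c R, b₀ ≤ curl2 A x) :
    (Real.pi / 8) * b₀ ^ 2 * R ^ 4 ≤ ∫ x in ediskO c R, ((A x).1 ^ 2 + (A x).2 ^ 2) := by
  classical
  have hπ : 0 < Real.pi := Real.pi_pos
  set π := Real.pi with hπdef
  set D := ediskO c R with hD
  set S := ∫ x in D, ((A x).1 ^ 2 + (A x).2 ^ 2) with hS
  -- basic geometry
  set a : ℝ × ℝ := (c.1 - 2*R, c.2 - 2*R) with ha
  set bb : ℝ × ℝ := (c.1 + 2*R, c.2 + 2*R) with hbb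
  have hab : a ≤ bb := by
    constructor <;> simp [ha, hbb] <;> linarith
  have hDsub : D ⊆ Set.Icc a bb := by
    intro x hx
    rw [hD, ediskO, Set.mem_setOf_eq] at hx
    constructor <;> constructor <;> simp [ha, hbb] <;>
      nlinarith [sq_nonneg (x.1 - c.1), sq_nonneg (x.2 - c.2), hx, hR]
  have hclsub : closure D ⊆ Set.Icc a bb := closure_minimal hDsub isClosed_Icc
  have hcompact : IsCompact (closure D) :=
    isCompact_Icc.of_isClosed_subset isClosed_closure hclsub
  -- differentiability/continuity facts for A
  have hAdiff : ∀ x ∈ W, DifferentiableAt ℝ A x := fun x hx =>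
    (hA.differentiableOn one_ne_zero).differentiableAt (hW.mem_nhds hx)
  have hA1 : ∀ x ∈ W, DifferentiableAt ℝ (fun y => (A y).1) x := fun x hx => (hAdiff x hx).fst
  have hA2 : ∀ x ∈ W, DifferentiableAt ℝ (fun y => (A y).2) x := fun x hx => (hAdiff x hx).snd
  have hAc : ContinuousOn A W := hA.continuousOn
  have hDA : ContinuousOn (fderiv ℝ A) W := hA.continuousOn_fderiv_of_isOpen hW le_rfl
  have hcurlW : ContinuousOn (curl2 A) W := by
    have heq : ∀ x ∈ W, curl2 A x = ((fderiv ℝ A x) (1,0)).2 - ((fderiv ℝ A x) (0,1)).1 := by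
      intro x hx
      have h1 : fderiv ℝ (fun y => (A y).2) x
          = (ContinuousLinearMap.snd ℝ ℝ ℝ).comp (fderiv ℝ A x) :=
        (hasFDerivAt_snd.comp x (hAdiff x hx).hasFDerivAt).fderiv
      have h2 : fderiv ℝ (fun y => (A y).1) x
          = (ContinuousLinearMap.fst ℝ ℝ ℝ).comp (fderiv ℝ A x) :=
        (hasFDerivAt_fst.comp x (hAdiff x hx).hasFDerivAt).fderiv
      rw [curl2, pd1, pd2, h1, h2]
      rfl
    apply ContinuousOn.congr _ heq
    apply ContinuousOn.sub
    · exact (hDA.clm_apply continuousOn_const).snd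
    · exact (hDA.clm_apply continuousOn_const).fst
  -- integrability helper
  have hinteg : ∀ {h : ℝ × ℝ → ℝ}, ContinuousOn h W → IntegrableOn h D volume := by
    intro h hh
    exact ((hh.mono hWc).integrableOn_compact hcompact).mono_set subset_closure
  -- the main estimate, for every ε > 0
  have hmain : ∀ ε : ℝ, 0 < ε →
      b₀ * (π*R^4/2 - π*ε*R^2) ≤ (2/b₀)*S + (b₀/8)*(2*π*R^4) := by
    intro ε hε
    set t := tfun c R with ht
    -- continuity of the various integrands on W
    have hc1 : ContinuousOn (fun x : ℝ × ℝ => b₀ * (t x - ε)) W := by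
      apply Continuous.continuousOn
      have := continuous_tfun c R
      fun_prop
    have hc2 : ContinuousOn (fun x => phi ε (t x) * curl2 A x) W := by
      apply ContinuousOn.mul _ hcurlW
      exact (((continuous_phi hε).comp (continuous_tfun c R)).continuousOn)
    have hc3 : ContinuousOn
        (fun x : ℝ × ℝ => psi ε (t x) * (2*((x.1-c.1)*(A x).2 - (x.2-c.2)*(A x).1))) W := by
      apply ContinuousOn.mul
      · exact ((continuous_psi hε).comp (continuous_tfun c R)).continuousOn
      · apply ContinuousOn.mul continuousOn_const
        apply ContinuousOn.sub
        · exact (Continuous.continuousOn (by fun_prop)).mul hAc.snd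
        · exact (Continuous.continuousOn (by fun_prop)).mul hAc.fst
    have hc4a : ContinuousOn (fun x : ℝ × ℝ => (2/b₀)*((A x).1^2+(A x).2^2)) W :=
      continuousOn_const.mul ((hAc.fst.pow 2).add (hAc.snd.pow 2))
    have hc4b : ContinuousOn
        (fun x : ℝ × ℝ => (b₀/8)*(4*psi ε (t x)^2*((x.1-c.1)^2+(x.2-c.2)^2))) W := by
      apply Continuous.continuousOn
      have hψ := (continuous_psi hε).comp (continuous_tfun c R)
      fun_prop
    have hc4 : ContinuousOn (fun x : ℝ × ℝ => (2/b₀)*((A x).1^2+(A x).2^2)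
        + (b₀/8)*(4*psi ε (t x)^2*((x.1-c.1)^2+(x.2-c.2)^2))) W := hc4a.add hc4b
    have hc5 : ContinuousOn (fun x : ℝ × ℝ => 4*((x.1-c.1)^2+(x.2-c.2)^2)) W := by
      apply Continuous.continuousOn; fun_prop
    -- STEP B: the divergence identity
    have hdivergence : ∫ x in D, phi ε (t x) * curl2 A x
        = ∫ x in D, psi ε (t x) * (2*((x.1-c.1)*(A x).2 - (x.2-c.2)*(A x).1)) := by
      set f : ℝ × ℝ → ℝ := fun y => phi ε (t y) * (A y).2 with hf
      set g : ℝ × ℝ → ℝ := fun y => -(phi ε (t y) * (A y).1) with hg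
      set f' : ℝ × ℝ → ℝ × ℝ →L[ℝ] ℝ := fun x => DF ε c R (fun y => (A y).2) x with hf'
      set g' : ℝ × ℝ → ℝ × ℝ →L[ℝ] ℝ := fun x => -(DF ε c R (fun y => (A y).1) x) with hg'
      have hdf : ∀ x, HasFDerivAt f (f' x) x := key_deriv hε c hR hW hWc hA2
      have hdg : ∀ x, HasFDerivAt g (g' x) x := fun x =>
        (key_deriv hε c hR hW hWc hA1 x).neg
      set Gf : ℝ × ℝ → ℝ := fun x => phi ε (t x) * curl2 A x
        - psi ε (t x) * (2*((x.1-c.1)*(A x).2 - (x.2-c.2)*(A x).1)) with hGf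
      have hGdef : ∀ x, f' x (1,0) + g' x (0,1) = Gf x := by
        intro x
        rw [hf', hg', hGf]
        simp only [DF, Dt_apply, ContinuousLinearMap.add_apply, ContinuousLinearMap.coe_smul',
          Pi.smul_apply, ContinuousLinearMap.neg_apply, smul_eq_mul, curl2, pd1, pd2]
        ring
      have hGcontW : ContinuousOn Gf W := hc2.sub hc3
      have hGzero : ∀ x, x ∉ D → Gf x = 0 := by
        intro x hx
        have hle : t x ≤ 0 := tfun_nonpos_of_not_mem hx
        rw [hGf]
        simp only
        rw [phi_of_nonpos hle, psi_of_nonpos hle]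
        ring
      have hGind : Gf = D.indicator Gf := by
        funext x
        by_cases hx : x ∈ D
        · rw [Set.indicator_of_mem hx]
        · rw [Set.indicator_of_notMem hx, hGzero x hx]
      have hGeq : (fun x => f' x (1,0) + g' x (0,1)) = Gf := funext hGdef
      have hGint : IntegrableOn (fun x => f' x (1,0) + g' x (0,1)) (Set.Icc a bb) := by
        rw [hGeq, hGind]
        exact ((hinteg hGcontW).integrable_indicator (measurableSet_ediskO c R)).integrableOn
      have hfc : Continuous f := key_cont hε c hR hW hWc hAc.snd
      have hgc : Continuous g := (key_cont hε c hR hW hWc hAc.fst).neg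
      have hdiv := integral_divergence_prod_Icc_of_hasFDerivAt_off_countable_of_le
        f g f' g' a bb hab ∅ Set.countable_empty hfc.continuousOn hgc.continuousOn
        (fun x _ => hdf x) (fun x _ => hdg x) hGint
      -- boundary terms vanish
      have hedge : ∀ x : ℝ × ℝ, x.1 = a.1 ∨ x.1 = bb.1 ∨ x.2 = a.2 ∨ x.2 = bb.2 →
          t x ≤ 0 := by
        intro x hx
        rw [ht]
        unfold tfun
        rcases hx with h | h | h | h <;> rw [h] <;> [skip; skip; skip; skip] <;>
          simp [ha, hbb] <;> nlinarith [sq_nonneg (x.1 - c.1), sq_nonneg (x.2 - c.2), hR]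
      have hb1 : ∫ x in a.1..bb.1, g (x, bb.2) = 0 := by
        have : ∀ x : ℝ, g (x, bb.2) = 0 := fun x => by
          rw [hg]; simp only
          rw [phi_of_nonpos (hedge (x, bb.2) (by right; right; right; rfl))]
          ring
        simp only [this, intervalIntegral.integral_zero]
      have hb2 : ∫ x in a.1..bb.1, g (x, a.2) = 0 := by
        have : ∀ x : ℝ, g (x, a.2) = 0 := fun x => by
          rw [hg]; simp only
          rw [phi_of_nonpos (hedge (x, a.2) (by right; right; left; rfl))]
          ring
        simp only [this, intervalIntegral.integral_zero]
      have hb3 : ∫ y in a.2..bb.2, f (bb.1, y) = 0 := by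
        have : ∀ y : ℝ, f (bb.1, y) = 0 := fun y => by
          rw [hf]; simp only
          rw [phi_of_nonpos (hedge (bb.1, y) (by right; left; rfl))]
          ring
        simp only [this, intervalIntegral.integral_zero]
      have hb4 : ∫ y in a.2..bb.2, f (a.1, y) = 0 := by
        have : ∀ y : ℝ, f (a.1, y) = 0 := fun y => by
          rw [hf]; simp only
          rw [phi_of_nonpos (hedge (a.1, y) (by left; rfl))]
          ring
        simp only [this, intervalIntegral.integral_zero]
      rw [hb1, hb2, hb3, hb4] at hdiv
      simp only [sub_zero, add_zero, zero_sub, zero_add, sub_self] at hdiv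
      -- hdiv : ∫ x in Icc a bb, f' x (1,0) + g' x (0,1) = 0
      rw [hGeq] at hdiv
      rw [hGind] at hdiv
      rw [setIntegral_indicator (measurableSet_ediskO c R)] at hdiv
      rw [Set.inter_eq_self_of_subset_right hDsub] at hdiv
      -- now ∫ x in D, Gf x = 0
      have hsub : ∫ x in D, Gf x
          = (∫ x in D, phi ε (t x) * curl2 A x)
            - ∫ x in D, psi ε (t x) * (2*((x.1-c.1)*(A x).2 - (x.2-c.2)*(A x).1)) := by
        rw [hGf]
        exact integral_sub (hinteg hc2) (hinteg hc3)
      rw [hsub] at hdiv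
      linarith [hdiv]
    -- step A : lower bound using curl ≥ b₀
    have hstepA : ∫ x in D, b₀ * (t x - ε) ≤ ∫ x in D, phi ε (t x) * curl2 A x := by
      apply setIntegral_mono_on (hinteg hc1) (hinteg hc2) (measurableSet_ediskO c R)
      intro x hx
      have h1 : t x - ε ≤ phi ε (t x) := phi_ge hε
      have h2 : b₀ ≤ curl2 A x := hcurl x hx
      have h0 : 0 ≤ phi ε (t x) := phi_nonneg hε
      nlinarith [mul_le_mul_of_nonneg_left h1 hb₀.le,
        mul_le_mul_of_nonneg_left h2 h0]
    -- step C : pointwise AM-GM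
    have hstepC : ∫ x in D, psi ε (t x) * (2*((x.1-c.1)*(A x).2 - (x.2-c.2)*(A x).1))
        ≤ ∫ x in D, ((2/b₀)*((A x).1^2+(A x).2^2)
            + (b₀/8)*(4*psi ε (t x)^2*((x.1-c.1)^2+(x.2-c.2)^2))) := by
      apply setIntegral_mono_on (hinteg hc3) (hinteg hc4) (measurableSet_ediskO c R)
      intro x _
      have h := amgm hb₀ (A x).1 (A x).2 (-2*psi ε (t x)*(x.2-c.2)) (2*psi ε (t x)*(x.1-c.1))
      have e1 : (A x).1*(-2*psi ε (t x)*(x.2-c.2)) + (A x).2*(2*psi ε (t x)*(x.1-c.1))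
          = psi ε (t x) * (2*((x.1-c.1)*(A x).2 - (x.2-c.2)*(A x).1)) := by ring
      have e2 : (2/b₀)*((A x).1^2+(A x).2^2)
            + (b₀/8)*((-2*psi ε (t x)*(x.2-c.2))^2 + (2*psi ε (t x)*(x.1-c.1))^2)
          = (2/b₀)*((A x).1^2+(A x).2^2)
            + (b₀/8)*(4*psi ε (t x)^2*((x.1-c.1)^2+(x.2-c.2)^2)) := by ring
      linarith [h, e1, e2]
    -- split the RHS integral
    have hsplit : ∫ x in D, ((2/b₀)*((A x).1^2+(A x).2^2)
            + (b₀/8)*(4*psi ε (t x)^2*((x.1-c.1)^2+(x.2-c.2)^2)))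
        = (2/b₀)*S + (b₀/8)*∫ x in D, 4*psi ε (t x)^2*((x.1-c.1)^2+(x.2-c.2)^2) := by
      rw [integral_add (hinteg hc4a) (hinteg hc4b), integral_const_mul, integral_const_mul]
    -- value of the left integral
    have hleft : ∫ x in D, b₀ * (t x - ε) = b₀ * (π*R^4/2 - π*ε*R^2) := by
      rw [integral_const_mul]
      have he : (fun x : ℝ × ℝ => t x - ε)
          = fun x => (fun s => R^2 - s - ε) ((x.1-c.1)^2 + (x.2-c.2)^2) := by
        funext x
        rw [ht]
        unfold tfun
        ring
      rw [he, hD]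
      rw [disk_integral c hR (fun s => R^2 - s - ε)]
      rw [int1 R ε]
      ring
    -- bound on the ψ² integral
    have hpsibound : ∫ x in D, 4*psi ε (t x)^2*((x.1-c.1)^2+(x.2-c.2)^2) ≤ 2*π*R^4 := by
      have hmono : ∫ x in D, 4*psi ε (t x)^2*((x.1-c.1)^2+(x.2-c.2)^2)
          ≤ ∫ x in D, 4*((x.1-c.1)^2+(x.2-c.2)^2) := by
        apply setIntegral_mono_on _ (hinteg hc5) (measurableSet_ediskO c R)
        · intro x _
          have h1 : 0 ≤ psi ε (t x) := psi_nonneg hε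
          have h2 : psi ε (t x) ≤ 1 := psi_le_one hε
          have h3 : psi ε (t x)^2 ≤ 1 := by nlinarith
          nlinarith [mul_le_mul_of_nonneg_right h3
            (by positivity : (0:ℝ) ≤ (x.1-c.1)^2+(x.2-c.2)^2)]
        · apply hinteg
          apply Continuous.continuousOn
          have hψ := (continuous_psi hε).comp (continuous_tfun c R)
          fun_prop
      have hval : ∫ x in D, 4*((x.1-c.1)^2+(x.2-c.2)^2) = 2*π*R^4 := by
        have he : (fun x : ℝ × ℝ => 4*((x.1-c.1)^2+(x.2-c.2)^2))
            = fun x => (fun s => 4*s) ((x.1-c.1)^2 + (x.2-c.2)^2) := by funext x; ring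
        rw [hD, he, disk_integral c hR (fun s => 4*s)]
        rw [int2 R]
      linarith
    -- combine
    have hmul : (b₀/8)*∫ x in D, 4*psi ε (t x)^2*((x.1-c.1)^2+(x.2-c.2)^2)
        ≤ (b₀/8)*(2*π*R^4) :=
      mul_le_mul_of_nonneg_left hpsibound (by positivity)
    calc b₀ * (π*R^4/2 - π*ε*R^2) = ∫ x in D, b₀ * (t x - ε) := hleft.symm
      _ ≤ ∫ x in D, phi ε (t x) * curl2 A x := hstepA
      _ = ∫ x in D, psi ε (t x) * (2*((x.1-c.1)*(A x).2 - (x.2-c.2)*(A x).1)) := hdivergence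
      _ ≤ ∫ x in D, ((2/b₀)*((A x).1^2+(A x).2^2)
            + (b₀/8)*(4*psi ε (t x)^2*((x.1-c.1)^2+(x.2-c.2)^2))) := hstepC
      _ = (2/b₀)*S + (b₀/8)*∫ x in D, 4*psi ε (t x)^2*((x.1-c.1)^2+(x.2-c.2)^2) := hsplit
      _ ≤ (2/b₀)*S + (b₀/8)*(2*π*R^4) := by linarith
  -- conclude from hmain by letting ε → 0
  have hkey : b₀ * (π*R^4/2) ≤ (2/b₀)*S + (b₀/8)*(2*π*R^4) := by
    apply le_of_forall_pos_le_add
    intro ε' hε'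
    have hεpos : 0 < ε' / (b₀ * π * R^2) := by positivity
    have h := hmain (ε' / (b₀ * π * R^2)) hεpos
    have heq : b₀ * (π * (ε' / (b₀ * π * R^2)) * R^2) = ε' := by
      field_simp
    nlinarith [h, heq]
  -- final algebra
  have h2 : b₀ * π * R^4/4 ≤ 2/b₀ * S := by linarith
  rw [div_mul_eq_mul_div, le_div_iff₀ hb₀] at h2
  show π / 8 * b₀ ^ 2 * R ^ 4 ≤ S
  nlinarith [h2]
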